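/- Let S be an inverse semigroup and ρ₁, ρ₂ left congruences on S. Then ρ₁ ⊆ ρ₂ if and only if trace(ρ₁) ⊆ trace(ρ₂) and InK(ρ₁) ⊆ InK(ρ₂). Consequently, ρ₁ = ρ₂ if and only if they have the same trace and the same inverse kernel. -/

import Mathlib

class InverseSemigroup (S : Type*) extends Semigroup S where
  inv : S → S
  mul_inv_mul : ∀ a : S, a * inv a * a = a
  inv_mul_inv : ∀ a : S, inv a * a * inv a = inv a
  inv_unique : ∀ a b : S, a * b * a = a → b * a * b = b → b = inv a

open InverseSemigroup

/-- `e` is an idempotent. -/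
def IsIdem {S : Type*} [Mul S] (e : S) : Prop := e * e = e

/-- `r` is a left congruence: an equivalence relation compatible with left multiplication. -/
def IsLeftCongruence {S : Type*} [Semigroup S] (r : S → S → Prop) : Prop :=
  Equivalence r ∧ ∀ a b c : S, r a b → r (c * a) (c * b)

/-- The inverse kernel of a relation: elements related to `a * a⁻¹`. -/
def InK {S : Type*} [InverseSemigroup S] (r : S → S → Prop) : Set S :=
  {a | r a (a * inv a)}

/-- The kernel: elements related to some idempotent. -/
def lker {S : Type*} [InverseSemigroup S] (r : S → S → Prop) : Set S :=
  {a | ∃ e, IsIdem e ∧ r a e}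

/-- `τ` is a congruence on the semilattice of idempotents `E(S)`. -/
def IsECong {S : Type*} [InverseSemigroup S] (τ : S → S → Prop) : Prop :=
  (∀ e f, τ e f → IsIdem e ∧ IsIdem f) ∧
  (∀ e, IsIdem e → τ e e) ∧
  (∀ e f, τ e f → τ f e) ∧
  (∀ e f g, τ e f → τ f g → τ e g) ∧
  (∀ e f g, IsIdem g → τ e f → τ (g * e) (g * f))

/-- The normaliser of a congruence on the idempotents. -/
def normaliser {S : Type*} [InverseSemigroup S] (τ : S → S → Prop) : Set S :=
  {a | ∀ e f, τ e f → τ (a * e * inv a) (a * f * inv a) ∧ τ (inv a * e * a) (inv a * f * a)}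

/-- `T` is a full inverse subsemigroup of `S`. -/
def IsFullInverseSub {S : Type*} [InverseSemigroup S] (T : Set S) : Prop :=
  (∀ e : S, IsIdem e → e ∈ T) ∧ (∀ a b, a ∈ T → b ∈ T → a * b ∈ T) ∧
  (∀ a, a ∈ T → inv a ∈ T)

namespace InverseSemigroup
variable {S : Type*} [InverseSemigroup S]

theorem inv_inv (a : S) : inv (inv a) = a :=
  (inv_unique (inv a) a (inv_mul_inv a) (mul_inv_mul a)).symm

theorem idem_inv {e : S} (he : IsIdem e) : inv e = e :=
  (inv_unique e e (by rw [he, he]) (by rw [he, he])).symm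

theorem mim_rw (a y : S) : a * (inv a * (a * y)) = a * y := by
  rw [← mul_assoc, ← mul_assoc, mul_inv_mul]

theorem imi_rw (a y : S) : inv a * (a * (inv a * y)) = inv a * y := by
  rw [← mul_assoc, ← mul_assoc, inv_mul_inv]

theorem idem_mul_inv (a : S) : IsIdem (a * inv a) := by
  show _ = _
  rw [← mul_assoc, mul_inv_mul]

theorem idem_inv_mul (a : S) : IsIdem (inv a * a) := by
  show _ = _
  rw [← mul_assoc, inv_mul_inv]

theorem idem_mul_idem {e f : S} (he : IsIdem e) (hf : IsIdem f) : IsIdem (e * f) := by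
  set x := inv (e * f) with hx
  have h1 : (e * f) * x * (e * f) = e * f := mul_inv_mul (e * f)
  have h2 : x * (e * f) * x = x := inv_mul_inv (e * f)
  have hA : (e * f) * (f * x * e) * (e * f) = e * f := by
    calc (e * f) * (f * x * e) * (e * f)
        = e * ((f * f) * (x * ((e * e) * f))) := by simp only [mul_assoc]
      _ = e * (f * (x * (e * f))) := by rw [he, hf]
      _ = e * f := by simpa only [mul_assoc] using h1
  have hB : (f * x * e) * (e * f) * (f * x * e) = f * x * e := by
    calc (f * x * e) * (e * f) * (f * x * e)
        = f * (x * ((e * e) * (f * f)) * x) * e := by simp only [mul_assoc]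
      _ = f * (x * (e * f) * x) * e := by rw [he, hf]
      _ = f * x * e := by rw [h2]
  have hfxe : f * x * e = x := inv_unique (e * f) (f * x * e) hA hB
  have hxx : (f * x * e) * (f * x * e) = f * x * e := by
    calc (f * x * e) * (f * x * e)
        = f * ((x * (e * f) * x) * e) := by simp only [mul_assoc]
      _ = f * (x * e) := by rw [h2]
      _ = f * x * e := by rw [mul_assoc]
  have hxidem : IsIdem x := by
    show x * x = x
    rw [← hfxe]; exact hxx
  have hix : inv x = e * f := by rw [hx, inv_inv]
  have hefx : e * f = x := by rw [← hix, idem_inv hxidem]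
  rw [hefx]; exact hxidem

theorem idem_comm {e f : S} (he : IsIdem e) (hf : IsIdem f) : e * f = f * e := by
  have hef : (e * f) * (e * f) = e * f := idem_mul_idem he hf
  have hfe : (f * e) * (f * e) = f * e := idem_mul_idem hf he
  simp only [mul_assoc] at hef hfe
  have hA : (e * f) * (f * e) * (e * f) = e * f := by
    calc (e * f) * (f * e) * (e * f)
        = e * ((f * f) * ((e * e) * f)) := by simp only [mul_assoc]
      _ = e * (f * (e * f)) := by rw [he, hf]
      _ = e * f := hef
  have hB : (f * e) * (e * f) * (f * e) = f * e := by
    calc (f * e) * (e * f) * (f * e)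
        = f * ((e * e) * ((f * f) * e)) := by simp only [mul_assoc]
      _ = f * (e * (f * e)) := by rw [he, hf]
      _ = f * e := hfe
  have := inv_unique (e * f) (f * e) hA hB
  rw [idem_inv (idem_mul_idem he hf)] at this
  exact this.symm

theorem mul_inv_rev (a b : S) : inv (a * b) = inv b * inv a := by
  have hcomm := idem_comm (idem_mul_inv b) (idem_inv_mul a)
  have hA : (a * b) * (inv b * inv a) * (a * b) = a * b := by
    calc (a * b) * (inv b * inv a) * (a * b)
        = a * ((b * inv b) * (inv a * a)) * b := by simp only [mul_assoc]
      _ = a * ((inv a * a) * (b * inv b)) * b := by rw [hcomm]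
      _ = a * b := by
          simp only [mul_assoc, mim_rw]
          rw [← mul_assoc b, mul_inv_mul]
  have hB : (inv b * inv a) * (a * b) * (inv b * inv a) = inv b * inv a := by
    calc (inv b * inv a) * (a * b) * (inv b * inv a)
        = inv b * ((inv a * a) * (b * inv b)) * inv a := by simp only [mul_assoc]
      _ = inv b * ((b * inv b) * (inv a * a)) * inv a := by rw [hcomm]
      _ = inv b * inv a := by
          simp only [mul_assoc, imi_rw]
          rw [← mul_assoc (inv a), inv_mul_inv]
  exact (inv_unique (a * b) (inv b * inv a) hA hB).symm

theorem key {r₁ r₂ : S → S → Prop}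
    (h₁ : IsLeftCongruence r₁) (h₂ : IsLeftCongruence r₂)
    (htr : ∀ e f, IsIdem e → IsIdem f → r₁ e f → r₂ e f)
    (hk : InK r₁ ⊆ InK r₂) : ∀ a b, r₁ a b → r₂ a b := by
  obtain ⟨eq₁, lc₁⟩ := h₁
  obtain ⟨eq₂, lc₂⟩ := h₂
  have claim : ∀ a b : S, r₁ a b → r₂ (a * inv a * b) a := by
    intro a b hab
    have h3 : r₁ (inv b * a) (inv b * b) := lc₁ _ _ _ hab
    have h4 := lc₁ _ _ (inv a * b) h3
    have e1 : inv a * b * (inv b * b) = inv a * b := by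
      rw [mul_assoc, ← mul_assoc b, mul_inv_mul]
    rw [e1] at h4
    -- h4 : r₁ ((inv a * b) * (inv b * a)) (inv a * b)
    have einv : inv (inv a * b) = inv b * a := by rw [mul_inv_rev, inv_inv]
    have hmem : (inv a * b) ∈ InK r₁ := by
      show r₁ (inv a * b) ((inv a * b) * inv (inv a * b))
      rw [einv]
      exact eq₁.symm h4
    have h6 : r₂ (inv a * b) ((inv a * b) * (inv b * a)) := by
      have := hk hmem
      change r₂ (inv a * b) ((inv a * b) * inv (inv a * b)) at this
      rw [← einv]
      exact this
    have h7 : r₁ (inv a * a) (inv a * b) := lc₁ _ _ _ hab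
    have h8 : r₁ (inv a * a) ((inv a * b) * (inv b * a)) := eq₁.trans h7 (eq₁.symm h4)
    have hbb : (b * inv b) * (b * inv b) = b * inv b := idem_mul_inv b
    have hcomm := idem_comm (idem_mul_inv b) (idem_mul_inv a)
    have hg : IsIdem ((inv a * b) * (inv b * a)) := by
      show _ = _
      calc ((inv a * b) * (inv b * a)) * ((inv a * b) * (inv b * a))
          = inv a * ((b * inv b) * ((a * inv a) * (b * inv b)) * a) := by
            simp only [mul_assoc]
        _ = inv a * ((b * inv b) * ((b * inv b) * (a * inv a)) * a) := by rw [← hcomm]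
        _ = inv a * ((b * inv b) * (a * inv a) * a) := by
            rw [← mul_assoc (b * inv b), hbb]
        _ = (inv a * b) * (inv b * a) := by
            simp only [mul_assoc]
            rw [← mul_assoc a (inv a) a, mul_inv_mul]
    have h9 : r₂ (inv a * a) ((inv a * b) * (inv b * a)) :=
      htr _ _ (idem_inv_mul a) hg h8
    have h10 : r₂ (inv a * b) (inv a * a) := eq₂.trans h6 (eq₂.symm h9)
    have h11 := lc₂ _ _ a h10
    rw [← mul_assoc, ← mul_assoc, mul_inv_mul] at h11
    exact h11
  intro a b hab
  have hA := claim a b hab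
  have hB := claim b a (eq₁.symm hab)
  have h12 := lc₂ _ _ (b * inv b) hA
  have hcomm := idem_comm (idem_mul_inv b) (idem_mul_inv a)
  have e2 : (b * inv b) * (a * inv a * b) = a * inv a * b := by
    calc (b * inv b) * (a * inv a * b)
        = (b * inv b) * (a * inv a) * b := by simp only [mul_assoc]
      _ = (a * inv a) * (b * inv b) * b := by rw [hcomm]
      _ = a * inv a * b := by rw [mul_assoc, mul_inv_mul]
  rw [e2] at h12
  exact eq₂.trans (eq₂.symm hA) (eq₂.trans h12 hB)

end InverseSemigroup

theorem stmt7 {S : Type*} [InverseSemigroup S] (r₁ r₂ : S → S → Prop)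
    (h₁ : IsLeftCongruence r₁) (h₂ : IsLeftCongruence r₂) :
    ((∀ a b, r₁ a b → r₂ a b) ↔
      ((∀ e f, IsIdem e → IsIdem f → r₁ e f → r₂ e f) ∧ InK r₁ ⊆ InK r₂)) ∧
    ((r₁ = r₂) ↔
      ((∀ e f : S, IsIdem e → IsIdem f → (r₁ e f ↔ r₂ e f)) ∧ InK r₁ = InK r₂)) := by
  constructor
  · constructor
    · intro h
      exact ⟨fun e f _ _ hef => h _ _ hef, fun a ha => h _ _ ha⟩
    · rintro ⟨htr, hk⟩
      exact InverseSemigroup.key h₁ h₂ htr hk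
  · constructor
    · rintro rfl
      exact ⟨fun _ _ _ _ => Iff.rfl, rfl⟩
    · rintro ⟨htr, hk⟩
      funext a b
      exact propext
        ⟨InverseSemigroup.key h₁ h₂ (fun e f he hf => (htr e f he hf).mp) hk.le a b,
         InverseSemigroup.key h₂ h₁ (fun e f he hf => (htr e f he hf).mpr) hk.ge a b⟩
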